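/- Let x be a positive natural number and let α : Fin (x·(x+1)) → ℕ be an antitone (monotonically non-increasing) sequence. Then either α takes at least x distinct values, or there exists an index i with i + x < x·(x+1) such that α i = α (i + x) (i.e., there are x+1 consecutive equal entries). -/
import Mathlib


theorem pigeonhole_scoring_vector (x : ℕ) (hx : 0 < x)
    (α : Fin (x * (x + 1)) → ℕ) (hα : Antitone α) :
    x ≤ (Finset.univ.image α).card ∨
      ∃ i : ℕ, ∃ h : i + x < x * (x + 1),
        α ⟨i, by omega⟩ = α ⟨i + x, h⟩ := by
  by_cases hc : ∃ i : ℕ, ∃ h : i + x < x * (x + 1), α ⟨i, by omega⟩ = α ⟨i + x, h⟩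
  · exact Or.inr hc
  push_neg at hc
  left
  have hbound : ∀ k : Fin x, (k : ℕ) * x < x * (x + 1) := by
    intro k; have := k.2; nlinarith
  set β : Fin x → ℕ := fun k => α ⟨(k : ℕ) * x, hbound k⟩ with hβ
  have hstep : ∀ a b : Fin x, a < b → β b < β a := by
    intro a b hab
    have hab' : (a : ℕ) < (b : ℕ) := hab
    have h1 : (a : ℕ) * x + x < x * (x + 1) := by
      have hb := b.2; nlinarith
    have hne := hc ((a : ℕ) * x) h1
    have hle : α ⟨(a : ℕ) * x + x, h1⟩ ≤ α ⟨(a : ℕ) * x, by omega⟩ :=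
      hα (by simp [Fin.le_def])
    have hlt : α ⟨(a : ℕ) * x + x, h1⟩ < α ⟨(a : ℕ) * x, by omega⟩ :=
      lt_of_le_of_ne hle (fun h => hne h.symm)
    have hle2 : β b ≤ α ⟨(a : ℕ) * x + x, h1⟩ := by
      apply hα
      simp only [Fin.le_def]
      have : (a : ℕ) + 1 ≤ (b : ℕ) := hab'
      nlinarith
    exact lt_of_le_of_lt hle2 hlt
  have hinj : Function.Injective β := by
    intro a b hab
    rcases lt_trichotomy a b with h | h | h
    · exact absurd hab.symm (ne_of_lt (hstep a b h))
    · exact h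
    · exact absurd hab (ne_of_lt (hstep b a h))
  calc x = (Finset.univ.image β).card := by
        rw [Finset.card_image_of_injective _ hinj, Finset.card_univ, Fintype.card_fin]
    _ ≤ (Finset.univ.image α).card := Finset.card_le_card (by
        intro y hy
        simp only [Finset.mem_image, Finset.mem_univ, true_and] at hy ⊢
        obtain ⟨k, hk⟩ := hy
        exact ⟨_, hk⟩)
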